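/- Let m, n ≥ 1. The class T^c_{m,n} has the disjoint amalgamation property: for all A, B, C in T^c_{m,n} and embeddings f : A → B and g : A → C, there exist D in T^c_{m,n} and embeddings f' : B → D and g' : C → D such that f' ∘ f = g' ∘ g and f'(B) ∩ g'(C) = f'(f(A)). -/

import Mathlib

universe u v

/-- An incidence structure on the type `M`: "points" and "lines" partition `M`,
and incidence only holds between a point and a line. -/
structure IncidenceData (M : Type u) where
  pt : M → Prop
  ln : M → Prop
  inc : M → M → Prop
  pt_or_ln : ∀ z, pt z ∨ ln z
  not_pt_and_ln : ∀ z, ¬(pt z ∧ ln z)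
  inc_pt_ln : ∀ x y, inc x y → pt x ∧ ln y

/-- `K_{m,n}`-freeness: there are no `m` pairwise distinct points and `n` pairwise
distinct lines with every one of the points incident to every one of the lines. -/
def KFree (m n : ℕ) {M : Type u} (S : IncidenceData M) : Prop :=
  ¬∃ (a : Fin m → M) (b : Fin n → M),
      Function.Injective a ∧ Function.Injective b ∧
      (∀ i, S.pt (a i)) ∧ (∀ j, S.ln (b j)) ∧ ∀ i j, S.inc (a i) (b j)

/-- Membership in `T^c_{m,n}`: a `K_{m,n}`-free incidence structure in which every `m`
pairwise distinct points are simultaneously incident to exactly `n-1` pairwise distinct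
lines, and every `n` pairwise distinct lines are simultaneously incident to exactly
`m-1` pairwise distinct points. -/
def Complete (m n : ℕ) {M : Type u} (S : IncidenceData M) : Prop :=
  KFree m n S ∧
  (∀ a : Fin m → M, Function.Injective a → (∀ i, S.pt (a i)) →
    ∃ b : Fin (n - 1) → M, Function.Injective b ∧ (∀ j, S.ln (b j)) ∧
      (∀ i j, S.inc (a i) (b j)) ∧ ∀ y, S.ln y → (∀ i, S.inc (a i) y) → ∃ j, y = b j) ∧
  (∀ b : Fin n → M, Function.Injective b → (∀ j, S.ln (b j)) →
    ∃ a : Fin (m - 1) → M, Function.Injective a ∧ (∀ i, S.pt (a i)) ∧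
      (∀ i j, S.inc (a i) (b j)) ∧ ∀ x, S.pt x → (∀ j, S.inc x (b j)) → ∃ i, x = a i)

/-- An embedding of incidence structures: an injective map preserving points, lines,
incidence and non-incidence. -/
structure IncEmbedding {M : Type u} {N : Type v} (S : IncidenceData M)
    (T : IncidenceData N) where
  toFun : M → N
  inj : Function.Injective toFun
  pt_iff : ∀ x, T.pt (toFun x) ↔ S.pt x
  ln_iff : ∀ x, T.ln (toFun x) ↔ S.ln x
  inc_iff : ∀ x y, T.inc (toFun x) (toFun y) ↔ S.inc x y

namespace Amalg648

open Function Set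

/-- The dual incidence structure. -/
def dualID {M : Type u} (S : IncidenceData M) : IncidenceData M where
  pt := S.ln
  ln := S.pt
  inc := fun x y => S.inc y x
  pt_or_ln := fun z => (S.pt_or_ln z).symm
  not_pt_and_ln := fun z h => S.not_pt_and_ln z ⟨h.2, h.1⟩
  inc_pt_ln := fun x y h => ⟨(S.inc_pt_ln y x h).2, (S.inc_pt_ln y x h).1⟩

@[simp] lemma dual_pt {M : Type u} (S : IncidenceData M) : (dualID S).pt = S.ln := rfl
@[simp] lemma dual_ln {M : Type u} (S : IncidenceData M) : (dualID S).ln = S.pt := rfl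
@[simp] lemma dual_inc {M : Type u} (S : IncidenceData M) (x y : M) :
    (dualID S).inc x y ↔ S.inc y x := Iff.rfl

lemma complete_dual {m n : ℕ} {M : Type u} {S : IncidenceData M} (h : Complete m n S) :
    Complete n m (dualID S) := by
  obtain ⟨h1, h2, h3⟩ := h
  refine ⟨?_, ?_, ?_⟩
  · rintro ⟨a, b, ha, hb, hpa, hlb, hinc⟩
    exact h1 ⟨b, a, hb, ha, (fun j => hlb j), (fun i => hpa i), fun i j => hinc j i⟩
  · intro a ha hpa
    obtain ⟨b, hbi, hbl, hbinc, hball⟩ := h3 a ha (fun i => hpa i)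
    exact ⟨b, hbi, hbl, fun i j => hbinc j i, hball⟩
  · intro b hb hlb
    obtain ⟨a, hai, hal, hainc, haall⟩ := h2 b hb (fun j => hlb j)
    exact ⟨a, hai, hal, fun i j => hainc j i, haall⟩

def dualE {M : Type u} {N : Type v} {S : IncidenceData M} {T : IncidenceData N}
    (e : IncEmbedding S T) : IncEmbedding (dualID S) (dualID T) where
  toFun := e.toFun
  inj := e.inj
  pt_iff := e.ln_iff
  ln_iff := e.pt_iff
  inc_iff := fun x y => e.inc_iff y x

/-- If `SA, SB` are complete and `e` is an embedding, then any line of `B` through the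
images of `m` distinct points of `A` is itself in the image of `A`. -/
lemma closed_lines {m n : ℕ} {A : Type u} {B : Type v} {SA : IncidenceData A}
    {SB : IncidenceData B} (hA : Complete m n SA) (hB : Complete m n SB)
    (e : IncEmbedding SA SB) (a : Fin m → A) (ha : Function.Injective a)
    (hpt : ∀ i, SA.pt (a i)) :
    ∀ y, SB.ln y → (∀ i, SB.inc (e.toFun (a i)) y) → y ∈ Set.range e.toFun := by
  obtain ⟨b0, hb0i, hb0l, hb0inc, -⟩ := hA.2.1 a ha hpt
  obtain ⟨bB, hbBi, hbBl, hbBinc, hbBall⟩ := hB.2.1 (fun i => e.toFun (a i))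
    (e.inj.comp ha) (fun i => (e.pt_iff _).2 (hpt i))
  have key : ∀ j, ∃ j', e.toFun (b0 j) = bB j' := by
    intro j
    exact hbBall _ ((e.ln_iff _).2 (hb0l j)) (fun i => (e.inc_iff _ _).2 (hb0inc i j))
  choose φ hφ using key
  have hφi : Function.Injective φ := by
    intro j j' hjj'
    apply hb0i; apply e.inj
    rw [hφ j, hφ j', hjj']
  have hφs : Function.Surjective φ := Finite.surjective_of_injective hφi
  intro y hy hyinc
  obtain ⟨j', rfl⟩ := hbBall y hy hyinc
  obtain ⟨j, rfl⟩ := hφs j'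
  exact ⟨b0 j, hφ j⟩

lemma closed_points {m n : ℕ} {A : Type u} {B : Type v} {SA : IncidenceData A}
    {SB : IncidenceData B} (hA : Complete m n SA) (hB : Complete m n SB)
    (e : IncEmbedding SA SB) (b : Fin n → A) (hb : Function.Injective b)
    (hln : ∀ j, SA.ln (b j)) :
    ∀ x, SB.pt x → (∀ j, SB.inc x (e.toFun (b j))) → x ∈ Set.range e.toFun :=
  closed_lines (complete_dual hA) (complete_dual hB) (dualE e) b hb hln


/-! ### The free amalgam -/

section FreeAmalgam

variable {m n : ℕ} {A B C : Type u} {SA : IncidenceData A} {SB : IncidenceData B}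
  {SC : IncidenceData C} (f : IncEmbedding SA SB) (g : IncEmbedding SA SC)

/-- Carrier of the free amalgam: `B` together with the part of `C` outside of `A`. -/
def M0 (B : Type u) {A C : Type u} {SA : IncidenceData A} {SC : IncidenceData C}
    (g : IncEmbedding SA SC) : Type u := B ⊕ {c : C // c ∉ Set.range g.toFun}

attribute [reducible] M0

def S0 (f : IncEmbedding SA SB) (g : IncEmbedding SA SC) : IncidenceData (M0 B g) where
  pt := Sum.elim SB.pt (fun c => SC.pt c.1)
  ln := Sum.elim SB.ln (fun c => SC.ln c.1)
  inc := fun x y =>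
    match x, y with
    | .inl b, .inl b' => SB.inc b b'
    | .inl b, .inr c => ∃ a, b = f.toFun a ∧ SC.inc (g.toFun a) c.1
    | .inr c, .inl b => ∃ a, b = f.toFun a ∧ SC.inc c.1 (g.toFun a)
    | .inr c, .inr c' => SC.inc c.1 c'.1
  pt_or_ln := by rintro (b | c)
                 · exact SB.pt_or_ln b
                 · exact SC.pt_or_ln c.1
  not_pt_and_ln := by rintro (b | c)
                      · exact SB.not_pt_and_ln b
                      · exact SC.not_pt_and_ln c.1
  inc_pt_ln := by
    rintro (b | c) (b' | c') h
    · exact SB.inc_pt_ln _ _ h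
    · obtain ⟨a, rfl, hi⟩ := h
      have := SC.inc_pt_ln _ _ hi
      exact ⟨(f.pt_iff a).2 ((g.pt_iff a).1 this.1), this.2⟩
    · obtain ⟨a, rfl, hi⟩ := h
      have := SC.inc_pt_ln _ _ hi
      exact ⟨this.1, (f.ln_iff a).2 ((g.ln_iff a).1 this.2)⟩
    · exact SC.inc_pt_ln _ _ h

/-- Embedding of `B` into the free amalgam. -/
def iB : IncEmbedding SB (S0 f g) where
  toFun := Sum.inl
  inj := Sum.inl_injective
  pt_iff := fun _ => Iff.rfl
  ln_iff := fun _ => Iff.rfl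
  inc_iff := fun _ _ => Iff.rfl

open Classical in
/-- Embedding of `C` into the free amalgam. -/
noncomputable def iCfun : C → M0 B g := fun c =>
  if h : ∃ a, g.toFun a = c then Sum.inl (f.toFun h.choose)
  else Sum.inr ⟨c, fun ⟨a, ha⟩ => h ⟨a, ha⟩⟩

lemma iCfun_g (a : A) : iCfun f g (g.toFun a) = Sum.inl (f.toFun a) := by
  have h : ∃ a', g.toFun a' = g.toFun a := ⟨a, rfl⟩
  have : h.choose = a := g.inj h.choose_spec
  simp [iCfun, dif_pos h, this]

lemma iCfun_not (c : C) (h : ¬∃ a, g.toFun a = c) :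
    iCfun f g c = Sum.inr ⟨c, fun ⟨a, ha⟩ => h ⟨a, ha⟩⟩ := by
  simp [iCfun, dif_neg h]

@[simp] lemma S0_pt_inl (b : B) : (S0 f g).pt (Sum.inl b) ↔ SB.pt b := Iff.rfl
@[simp] lemma S0_pt_inr (c : {c : C // c ∉ Set.range g.toFun}) :
    (S0 f g).pt (Sum.inr c) ↔ SC.pt c.1 := Iff.rfl
@[simp] lemma S0_ln_inl (b : B) : (S0 f g).ln (Sum.inl b) ↔ SB.ln b := Iff.rfl
@[simp] lemma S0_ln_inr (c : {c : C // c ∉ Set.range g.toFun}) :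
    (S0 f g).ln (Sum.inr c) ↔ SC.ln c.1 := Iff.rfl
@[simp] lemma S0_inc_inl_inl (b b' : B) :
    (S0 f g).inc (Sum.inl b) (Sum.inl b') ↔ SB.inc b b' := Iff.rfl
@[simp] lemma S0_inc_inl_inr (b : B) (c : {c : C // c ∉ Set.range g.toFun}) :
    (S0 f g).inc (Sum.inl b) (Sum.inr c) ↔ ∃ a, b = f.toFun a ∧ SC.inc (g.toFun a) c.1 :=
  Iff.rfl
@[simp] lemma S0_inc_inr_inl (b : B) (c : {c : C // c ∉ Set.range g.toFun}) :
    (S0 f g).inc (Sum.inr c) (Sum.inl b) ↔ ∃ a, b = f.toFun a ∧ SC.inc c.1 (g.toFun a) :=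
  Iff.rfl
@[simp] lemma S0_inc_inr_inr (c c' : {c : C // c ∉ Set.range g.toFun}) :
    (S0 f g).inc (Sum.inr c) (Sum.inr c') ↔ SC.inc c.1 c'.1 := Iff.rfl

lemma iCfun_not_mem (c : C) (h : c ∉ Set.range g.toFun) :
    iCfun f g c = Sum.inr ⟨c, h⟩ := by
  have h' : ¬∃ a, g.toFun a = c := fun ⟨a, ha⟩ => h ⟨a, ha⟩
  rw [iCfun_not f g c h']

/-- Embedding of `C` into the free amalgam. -/
noncomputable def iC : IncEmbedding SC (S0 f g) where
  toFun := iCfun f g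
  inj := by
    intro c c' h
    by_cases hc : c ∈ Set.range g.toFun <;> by_cases hc' : c' ∈ Set.range g.toFun
    · obtain ⟨a, rfl⟩ := hc; obtain ⟨a', rfl⟩ := hc'
      rw [iCfun_g, iCfun_g] at h
      exact congrArg g.toFun (f.inj (Sum.inl_injective h))
    · obtain ⟨a, rfl⟩ := hc
      rw [iCfun_g, iCfun_not_mem f g c' hc'] at h
      exact absurd h (by simp)
    · obtain ⟨a', rfl⟩ := hc'
      rw [iCfun_g, iCfun_not_mem f g c hc] at h
      exact absurd h (by simp)
    · rw [iCfun_not_mem f g c hc, iCfun_not_mem f g c' hc'] at h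
      simpa using congrArg (Sum.elim (fun _ => c) Subtype.val) h
  pt_iff := by
    intro c
    by_cases hc : c ∈ Set.range g.toFun
    · obtain ⟨a, rfl⟩ := hc
      rw [iCfun_g, S0_pt_inl, f.pt_iff, ← g.pt_iff]
    · rw [iCfun_not_mem f g c hc, S0_pt_inr]
  ln_iff := by
    intro c
    by_cases hc : c ∈ Set.range g.toFun
    · obtain ⟨a, rfl⟩ := hc
      rw [iCfun_g, S0_ln_inl, f.ln_iff, ← g.ln_iff]
    · rw [iCfun_not_mem f g c hc, S0_ln_inr]
  inc_iff := by
    intro c c'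
    by_cases hc : c ∈ Set.range g.toFun <;> by_cases hc' : c' ∈ Set.range g.toFun
    · obtain ⟨a, rfl⟩ := hc; obtain ⟨a', rfl⟩ := hc'
      rw [iCfun_g, iCfun_g, S0_inc_inl_inl, f.inc_iff, ← g.inc_iff]
    · obtain ⟨a, rfl⟩ := hc
      rw [iCfun_g, iCfun_not_mem f g c' hc', S0_inc_inl_inr]
      constructor
      · rintro ⟨a', ha', hi⟩
        rw [f.inj ha']; exact hi
      · intro hi; exact ⟨a, rfl, hi⟩
    · obtain ⟨a', rfl⟩ := hc'
      rw [iCfun_g, iCfun_not_mem f g c hc, S0_inc_inr_inl]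
      constructor
      · rintro ⟨a'', ha'', hi⟩
        rw [f.inj ha'']; exact hi
      · intro hi; exact ⟨a', rfl, hi⟩
    · rw [iCfun_not_mem f g c hc, iCfun_not_mem f g c' hc', S0_inc_inr_inr]

lemma iB_f_iC_g (a : A) : (iB f g).toFun (f.toFun a) = (iC f g).toFun (g.toFun a) :=
  (iCfun_g f g a).symm

lemma range_inter :
    Set.range (iB f g).toFun ∩ Set.range (iC f g).toFun
      = (iB f g).toFun '' Set.range f.toFun := by
  apply Set.Subset.antisymm
  · rintro x ⟨⟨b, rfl⟩, ⟨c, hc⟩⟩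
    by_cases hcr : c ∈ Set.range g.toFun
    · obtain ⟨a, rfl⟩ := hcr
      have : (iC f g).toFun (g.toFun a) = Sum.inl (f.toFun a) := iCfun_g f g a
      rw [this] at hc
      exact ⟨f.toFun a, ⟨a, rfl⟩, hc⟩
    · have : (iC f g).toFun c = Sum.inr ⟨c, hcr⟩ := iCfun_not_mem f g c hcr
      rw [this] at hc
      exact absurd hc (fun h => nomatch h)
  · rintro x ⟨b, ⟨a, rfl⟩, rfl⟩
    exact ⟨⟨f.toFun a, rfl⟩, ⟨g.toFun a, (iCfun_g f g a)⟩⟩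

lemma kfree_S0 (hA : Complete m n SA) (hB : Complete m n SB) (hC : Complete m n SC) :
    KFree m n (S0 f g) := by
  rintro ⟨p, l, hpi, hli, hpp, hll, hinc⟩
  classical
  by_cases hP : ∃ i c, p i = Sum.inr c
  · -- some point comes from `C \ A`
    obtain ⟨i0, c, hc⟩ := hP
    have hcpt : SC.pt c.1 := by
      have := hpp i0; rw [hc] at this; exact this
    have hlform : ∀ j, (∃ a, l j = Sum.inl (f.toFun a) ∧ SC.inc c.1 (g.toFun a)) ∨
        (∃ c', l j = Sum.inr c') := by
      intro j
      have h := hinc i0 j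
      rw [hc] at h
      rcases hlj : l j with b | c'
      · rw [hlj] at h
        obtain ⟨a, rfl, hi⟩ := h
        exact Or.inl ⟨a, rfl, hi⟩
      · exact Or.inr ⟨c', rfl⟩
    by_cases hLinl : ∀ j, ∃ a, l j = Sum.inl (f.toFun a) ∧ SC.inc c.1 (g.toFun a)
    · -- all lines are images of lines of `A`; contradiction via `closed_points`
      choose la hla hlainc using hLinl
      have hlai : Function.Injective la := by
        intro j j' h
        exact hli (by rw [hla j, hla j', h])
      have hlaln : ∀ j, SA.ln (la j) := by
        intro j
        have := hll j; rw [hla j] at this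
        exact (f.ln_iff _).1 this
      have := closed_points hA hC g la hlai hlaln c.1 hcpt hlainc
      exact c.2 this
    · -- some line comes from `C \ A`: the whole configuration lives in `C`
      push_neg at hLinl
      obtain ⟨j0, hj0⟩ := hLinl
      obtain ⟨c0, hc0⟩ := (hlform j0).resolve_left (by
        rintro ⟨a, ha, hi⟩; exact hj0 a ha hi)
      have hpC : ∀ i, ∃ cc : C, (iC f g).toFun cc = p i := by
        intro i
        have h := hinc i j0
        rw [hc0] at h
        rcases hpi' : p i with b | c''
        · rw [hpi'] at h
          obtain ⟨a, rfl, -⟩ := h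
          exact ⟨g.toFun a, (iCfun_g f g a)⟩
        · exact ⟨c''.1, iCfun_not_mem f g c''.1 c''.2⟩
      have hlC : ∀ j, ∃ cc : C, (iC f g).toFun cc = l j := by
        intro j
        rcases hlform j with ⟨a, ha, -⟩ | ⟨c', hc'⟩
        · exact ⟨g.toFun a, by rw [ha]; exact (iCfun_g f g a)⟩
        · exact ⟨c'.1, by rw [hc']; exact iCfun_not_mem f g c'.1 c'.2⟩
      choose pc hpc using hpC
      choose lc hlc using hlC
      refine hC.1 ⟨pc, lc, ?_, ?_, ?_, ?_, ?_⟩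
      · intro i i' h
        exact hpi (by rw [← hpc i, ← hpc i', h])
      · intro j j' h
        exact hli (by rw [← hlc j, ← hlc j', h])
      · intro i
        have := hpp i; rw [← hpc i] at this
        exact ((iC f g).pt_iff _).1 this
      · intro j
        have := hll j; rw [← hlc j] at this
        exact ((iC f g).ln_iff _).1 this
      · intro i j
        have := hinc i j; rw [← hpc i, ← hlc j] at this
        exact ((iC f g).inc_iff _ _).1 this
  · by_cases hL : ∃ j c, l j = Sum.inr c
    · -- all points from `B`, some line from `C \ A`
      obtain ⟨j0, c0, hc0⟩ := hL
      push_neg at hP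
      have hpA : ∀ i, ∃ a, p i = Sum.inl (f.toFun a) ∧ SC.inc (g.toFun a) c0.1 := by
        intro i
        have h := hinc i j0
        rcases hpi' : p i with b | c''
        · rw [hpi', hc0] at h
          obtain ⟨a, rfl, hi⟩ := h
          exact ⟨a, rfl, hi⟩
        · exact absurd hpi' (hP i c'')
      choose pa hpa hpainc using hpA
      have hpai : Function.Injective pa := by
        intro i i' h
        exact hpi (by rw [hpa i, hpa i', h])
      have hpapt : ∀ i, SA.pt (pa i) := by
        intro i
        have := hpp i; rw [hpa i] at this
        exact (f.pt_iff _).1 this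
      have hc0ln : SC.ln c0.1 := by
        have := hll j0; rw [hc0] at this; exact this
      have := closed_lines hA hC g pa hpai hpapt c0.1 hc0ln hpainc
      exact c0.2 this
    · -- everything lives in `B`
      push_neg at hP; push_neg at hL
      have hpB : ∀ i, ∃ b, p i = Sum.inl b := by
        intro i
        rcases hpi' : p i with b | c''
        · exact ⟨b, rfl⟩
        · exact absurd hpi' (hP i c'')
      have hlB : ∀ j, ∃ b, l j = Sum.inl b := by
        intro j
        rcases hlj : l j with b | c''
        · exact ⟨b, rfl⟩
        · exact absurd hlj (hL j c'')
      choose pb hpb using hpB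
      choose lb hlb using hlB
      refine hB.1 ⟨pb, lb, ?_, ?_, ?_, ?_, ?_⟩
      · intro i i' h
        exact hpi (by rw [hpb i, hpb i', h])
      · intro j j' h
        exact hli (by rw [hlb j, hlb j', h])
      · intro i
        have := hpp i; rw [hpb i] at this; exact this
      · intro j
        have := hll j; rw [hlb j] at this; exact this
      · intro i j
        have := hinc i j; rw [hpb i, hlb j] at this; exact this

end FreeAmalgam

/-! ### The completion process -/

section Completion

inductive Pre (m n : ℕ) (β : Type u) : Type u
  | base : β → Pre m n β
  | nl : (Fin m → Pre m n β) → ℕ → Pre m n β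
  | np : (Fin n → Pre m n β) → ℕ → Pre m n β

variable {m n : ℕ} {β : Type u} (T : IncidenceData β)

def Pt : Pre m n β → Prop
  | .base x => T.pt x
  | .nl _ _ => False
  | .np _ _ => True

def Ln : Pre m n β → Prop
  | .base x => T.ln x
  | .nl _ _ => True
  | .np _ _ => False

def Inc : Pre m n β → Pre m n β → Prop
  | .base x, .base y => T.inc x y
  | .base x, .nl a _ => Pre.base x ∈ Set.range a
  | .base _, .np _ _ => False
  | .nl _ _, _ => False
  | .np b _, .base y => Pre.base y ∈ Set.range b
  | .np b i, .nl a j => Pre.np b i ∈ Set.range a ∨ Pre.nl a j ∈ Set.range b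
  | .np _ _, .np _ _ => False

@[simp] lemma Pt_base (x : β) : Pt T (Pre.base x : Pre m n β) ↔ T.pt x := Iff.rfl
@[simp] lemma Pt_nl (a : Fin m → Pre m n β) (j : ℕ) : ¬ Pt T (Pre.nl a j) := fun h => h
@[simp] lemma Pt_np (b : Fin n → Pre m n β) (i : ℕ) : Pt T (Pre.np b i) := trivial
@[simp] lemma Ln_base (x : β) : Ln T (Pre.base x : Pre m n β) ↔ T.ln x := Iff.rfl
@[simp] lemma Ln_nl (a : Fin m → Pre m n β) (j : ℕ) : Ln T (Pre.nl a j) := trivial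
@[simp] lemma Ln_np (b : Fin n → Pre m n β) (i : ℕ) : ¬ Ln T (Pre.np b i) := fun h => h

lemma Pt_or_Ln (x : Pre m n β) : Pt T x ∨ Ln T x := by
  cases x with
  | base z => exact T.pt_or_ln z
  | nl a j => exact Or.inr trivial
  | np b i => exact Or.inl trivial

lemma not_Pt_and_Ln (x : Pre m n β) : ¬(Pt T x ∧ Ln T x) := by
  cases x with
  | base z => exact T.not_pt_and_ln z
  | nl a j => exact fun h => h.1
  | np b i => exact fun h => h.2

@[simp] lemma Inc_base_base (x y : β) :
    Inc T (Pre.base x : Pre m n β) (Pre.base y) ↔ T.inc x y := Iff.rfl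

lemma not_Inc_nl_left (a : Fin m → Pre m n β) (j : ℕ) (y : Pre m n β) :
    ¬ Inc T (Pre.nl a j) y := by
  cases y <;> exact fun h => h

lemma inc_to_nl_elim {x : Pre m n β} {a : Fin m → Pre m n β} {j : ℕ}
    (h : Inc T x (Pre.nl a j)) :
    x ∈ Set.range a ∨ ∃ (b : Fin n → Pre m n β) (i : ℕ),
      x = Pre.np b i ∧ Pre.nl a j ∈ Set.range b := by
  cases x with
  | base z => exact Or.inl h
  | nl a' j' => exact absurd h (not_Inc_nl_left T a' j' _)
  | np b i =>
      rcases h with h | h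
      · exact Or.inl h
      · exact Or.inr ⟨b, i, rfl, h⟩

lemma inc_to_nl_intro {x : Pre m n β} {a : Fin m → Pre m n β} {j : ℕ}
    (hx : Pt T x) (hmem : x ∈ Set.range a) : Inc T x (Pre.nl a j) := by
  cases x with
  | base z => exact hmem
  | nl a' j' => exact absurd hx (Pt_nl T a' j')
  | np b i => exact Or.inl hmem

lemma inc_np_elim {y : Pre m n β} {b : Fin n → Pre m n β} {i : ℕ}
    (h : Inc T (Pre.np b i) y) :
    y ∈ Set.range b ∨ ∃ (a : Fin m → Pre m n β) (j : ℕ),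
      y = Pre.nl a j ∧ Pre.np b i ∈ Set.range a := by
  cases y with
  | base z => exact Or.inl h
  | nl a j =>
      rcases h with h | h
      · exact Or.inr ⟨a, j, rfl, h⟩
      · exact Or.inl h
  | np b' i' => exact absurd h (fun h => h)

lemma inc_np_intro {y : Pre m n β} {b : Fin n → Pre m n β} {i : ℕ}
    (hy : Ln T y) (hmem : y ∈ Set.range b) : Inc T (Pre.np b i) y := by
  cases y with
  | base z => exact hmem
  | nl a j => exact Or.inr hmem
  | np b' i' => exact absurd hy (Ln_np T b' i')

/-- An abstract enumeration of a set by `Fin k`. -/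
def IsEnum {X : Type u} (k : ℕ) (P : Set X) : Prop :=
  ∃ e : Fin k → X, Function.Injective e ∧ Set.range e = P

noncomputable def enumOf {X : Type u} {k : ℕ} {P : Set X} (h : IsEnum k P) : Fin k → X :=
  h.choose

lemma enumOf_inj {X : Type u} {k : ℕ} {P : Set X} (h : IsEnum k P) :
    Function.Injective (enumOf h) := h.choose_spec.1

lemma enumOf_range {X : Type u} {k : ℕ} {P : Set X} (h : IsEnum k P) :
    Set.range (enumOf h) = P := h.choose_spec.2

lemma ncard_range_of_inj {X : Type u} {k : ℕ} {e : Fin k → X}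
    (he : Function.Injective e) : (Set.range e).ncard = k := by
  rw [← Set.image_univ, Set.ncard_image_of_injective _ he, Set.ncard_univ, Nat.card_eq_fintype_card,
    Fintype.card_fin]

lemma enumOf_congr {X : Type u} {k : ℕ} {P Q : Set X} (hPQ : P = Q) (hP : IsEnum k P)
    (hQ : IsEnum k Q) : enumOf hP = enumOf hQ := by
  subst hPQ
  exact congrArg (fun hh => enumOf hh) (Subsingleton.elim hP hQ)

lemma exists_enum_of_finite {X : Type u} {s : Set X} {k : ℕ} (hf : s.Finite)
    (hc : s.ncard = k) : IsEnum k s := by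
  have : Fintype s := hf.fintype
  have hcard : Fintype.card s = k := by
    rw [← hc, Set.ncard_eq_toFinset_card' s, Set.toFinset_card]
  let eqv := Fintype.equivFinOfCardEq hcard
  refine ⟨fun i => (eqv.symm i).1, ?_, ?_⟩
  · intro i i' h
    exact eqv.symm.injective (Subtype.ext h)
  · ext x
    constructor
    · rintro ⟨i, rfl⟩; exact (eqv.symm i).2
    · intro hx; exact ⟨eqv ⟨x, hx⟩, by simp⟩

lemma IsEnum.finite {X : Type u} {k : ℕ} {P : Set X} (h : IsEnum k P) : P.Finite := by
  obtain ⟨e, -, rfl⟩ := h; exact Set.finite_range e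

lemma IsEnum.ncard {X : Type u} {k : ℕ} {P : Set X} (h : IsEnum k P) : P.ncard = k := by
  obtain ⟨e, he, rfl⟩ := h; exact ncard_range_of_inj he

lemma le_ncard_of_inj {X : Type u} {k : ℕ} {e : Fin k → X} {s : Set X}
    (he : Function.Injective e) (hsub : Set.range e ⊆ s) (hs : s.Finite) : k ≤ s.ncard := by
  have := Set.ncard_le_ncard hsub hs
  rwa [ncard_range_of_inj he] at this

lemma exists_inj_into {X : Type u} {s : Set X} {k : ℕ}
    (h : ¬(s.Finite ∧ s.ncard ≤ k - 1)) (hk : 1 ≤ k) :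
    ∃ e : Fin k → X, Function.Injective e ∧ Set.range e ⊆ s := by
  rcases Set.finite_or_infinite s with hf | hf
  · have hcard : k ≤ s.ncard := by
      rcases Nat.lt_or_ge s.ncard k with h' | h'
      · exact absurd ⟨hf, by omega⟩ h
      · exact h'
    obtain ⟨t, hts, htc⟩ := Set.exists_subset_card_eq hcard
    obtain ⟨e, hei, her⟩ := exists_enum_of_finite (hf.subset hts) htc
    exact ⟨e, hei, her ▸ hts⟩
  · obtain ⟨t, hts, htf, htc⟩ := Set.Infinite.exists_subset_ncard_eq hf k
    obtain ⟨e, hei, her⟩ := exists_enum_of_finite htf htc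
    exact ⟨e, hei, her ▸ hts⟩

/-- Lines of the structure `s` incident with every element of `P`. -/
def commonL (s P : Set (Pre m n β)) : Set (Pre m n β) :=
  {y | y ∈ s ∧ Ln T y ∧ ∀ p ∈ P, Inc T p y}

/-- Points of the structure `s` incident with every element of `L`. -/
def commonP (s L : Set (Pre m n β)) : Set (Pre m n β) :=
  {x | x ∈ s ∧ Pt T x ∧ ∀ y ∈ L, Inc T x y}

lemma commonL_mono {s s' P : Set (Pre m n β)} (h : s ⊆ s') :
    commonL T s P ⊆ commonL T s' P := fun y hy => ⟨h hy.1, hy.2⟩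

lemma commonP_mono {s s' L : Set (Pre m n β)} (h : s ⊆ s') :
    commonP T s L ⊆ commonP T s' L := fun x hx => ⟨h hx.1, hx.2⟩

def newLines (s : Set (Pre m n β)) : Set (Pre m n β) :=
  {x | ∃ (P : Set (Pre m n β)) (h : IsEnum m P) (j : ℕ),
    x = Pre.nl (enumOf h) j ∧ (∀ p ∈ P, Pt T p ∧ p ∈ s) ∧
      j < (n - 1) - (commonL T s P).ncard}

def newPoints (s : Set (Pre m n β)) : Set (Pre m n β) :=
  {x | ∃ (L : Set (Pre m n β)) (h : IsEnum n L) (i : ℕ),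
    x = Pre.np (enumOf h) i ∧ (∀ y ∈ L, Ln T y ∧ y ∈ s) ∧
      i < (m - 1) - (commonP T s L).ncard}

def stage : ℕ → Set (Pre m n β)
  | 0 => Set.range Pre.base
  | k + 1 => stage k ∪ newLines T (stage k) ∪ newPoints T (stage k)

lemma stage_succ_subset (k : ℕ) :
    (stage T k : Set (Pre m n β)) ⊆ stage T (k + 1) :=
  fun _ hx => Or.inl (Or.inl hx)

lemma stage_mono {k l : ℕ} (h : k ≤ l) : (stage T k : Set (Pre m n β)) ⊆ stage T l := by
  induction l with
  | zero =>
      have : k = 0 := Nat.le_zero.1 h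
      subst this; exact fun x hx => hx
  | succ l ih =>
      rcases Nat.lt_or_ge k (l + 1) with h' | h'
      · exact (ih (by omega)).trans (stage_succ_subset T l)
      · have : k = l + 1 := by omega
        subst this; exact fun x hx => hx

lemma mem_stage_succ_elim {x : Pre m n β} {k : ℕ} (h : x ∈ stage T (k + 1)) :
    x ∈ stage T k ∨ x ∈ newLines T (stage T k) ∨ x ∈ newPoints T (stage T k) := by
  rcases h with (h | h) | h
  · exact Or.inl h
  · exact Or.inr (Or.inl h)
  · exact Or.inr (Or.inr h)

lemma nl_new_elim {a : Fin m → Pre m n β} {j : ℕ} {s : Set (Pre m n β)}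
    (h : Pre.nl a j ∈ newLines T s) :
    Function.Injective a ∧ (∀ i, Pt T (a i) ∧ a i ∈ s) ∧
      j < (n - 1) - (commonL T s (Set.range a)).ncard ∧
      ∀ h' : IsEnum m (Set.range a), a = enumOf h' := by
  obtain ⟨P, hP, j', heq, hcond, hj⟩ := h
  obtain ⟨ha, hj'⟩ : a = enumOf hP ∧ j = j' := by
    injection heq with h1 h2; exact ⟨h1, h2⟩
  subst ha; subst hj'
  have hrange : Set.range (enumOf hP) = P := enumOf_range hP
  refine ⟨enumOf_inj hP, fun i => hcond _ (hrange.subset ⟨i, rfl⟩), ?_, ?_⟩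
  · rw [hrange]; exact hj
  · intro h'
    exact enumOf_congr hrange.symm hP h'

lemma np_new_elim {b : Fin n → Pre m n β} {i : ℕ} {s : Set (Pre m n β)}
    (h : Pre.np b i ∈ newPoints T s) :
    Function.Injective b ∧ (∀ j, Ln T (b j) ∧ b j ∈ s) ∧
      i < (m - 1) - (commonP T s (Set.range b)).ncard ∧
      ∀ h' : IsEnum n (Set.range b), b = enumOf h' := by
  obtain ⟨L, hL, i', heq, hcond, hi⟩ := h
  obtain ⟨hb, hi'⟩ : b = enumOf hL ∧ i = i' := by
    injection heq with h1 h2; exact ⟨h1, h2⟩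
  subst hb; subst hi'
  have hrange : Set.range (enumOf hL) = L := enumOf_range hL
  refine ⟨enumOf_inj hL, fun j => hcond _ (hrange.subset ⟨j, rfl⟩), ?_, ?_⟩
  · rw [hrange]; exact hi
  · intro h'
    exact enumOf_congr hrange.symm hL h'

lemma nl_shape_new {x : Pre m n β} {s : Set (Pre m n β)} (h : x ∈ newLines T s) :
    ∃ a j, x = Pre.nl a j := by
  obtain ⟨P, hP, j, rfl, -, -⟩ := h; exact ⟨_, _, rfl⟩

lemma np_shape_new {x : Pre m n β} {s : Set (Pre m n β)} (h : x ∈ newPoints T s) :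
    ∃ b i, x = Pre.np b i := by
  obtain ⟨L, hL, i, rfl, -, -⟩ := h; exact ⟨_, _, rfl⟩

lemma tags_nl : ∀ k {a : Fin m → Pre m n β} {j : ℕ}, Pre.nl a j ∈ stage T k →
    Function.Injective a ∧ (∀ i, Pt T (a i) ∧ a i ∈ stage T k) := by
  intro k
  induction k with
  | zero => rintro a j ⟨z, h⟩; exact absurd h (by exact fun h => nomatch h)
  | succ k ih =>
      intro a j h
      rcases mem_stage_succ_elim T h with h | h | h
      · obtain ⟨h1, h2⟩ := ih h
        exact ⟨h1, fun i => ⟨(h2 i).1, stage_succ_subset T k (h2 i).2⟩⟩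
      · obtain ⟨h1, h2, -, -⟩ := nl_new_elim T h
        exact ⟨h1, fun i => ⟨(h2 i).1, stage_succ_subset T k (h2 i).2⟩⟩
      · obtain ⟨b, i, heq⟩ := np_shape_new T h
        exact absurd heq (by exact fun h => nomatch h)

lemma tags_np : ∀ k {b : Fin n → Pre m n β} {i : ℕ}, Pre.np b i ∈ stage T k →
    Function.Injective b ∧ (∀ j, Ln T (b j) ∧ b j ∈ stage T k) := by
  intro k
  induction k with
  | zero => rintro b i ⟨z, h⟩; exact absurd h (by exact fun h => nomatch h)
  | succ k ih =>
      intro b i h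
      rcases mem_stage_succ_elim T h with h | h | h
      · obtain ⟨h1, h2⟩ := ih h
        exact ⟨h1, fun j => ⟨(h2 j).1, stage_succ_subset T k (h2 j).2⟩⟩
      · obtain ⟨a, j, heq⟩ := nl_shape_new T h
        exact absurd heq (by exact fun h => nomatch h)
      · obtain ⟨h1, h2, -, -⟩ := np_new_elim T h
        exact ⟨h1, fun j => ⟨(h2 j).1, stage_succ_subset T k (h2 j).2⟩⟩

/-- `K_{m,n}`-freeness for a subset of `Pre`. -/
def KF (s : Set (Pre m n β)) : Prop :=
  ¬∃ (p : Fin m → Pre m n β) (l : Fin n → Pre m n β),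
      Function.Injective p ∧ Function.Injective l ∧
      (∀ i, p i ∈ s ∧ Pt T (p i)) ∧ (∀ j, l j ∈ s ∧ Ln T (l j)) ∧
      ∀ i j, Inc T (p i) (l j)

end Completion

end Amalg648

namespace Amalg648

section Completion2

variable {β : Type u} (T : IncidenceData β)

/-- Small common-line sets: finiteness and a bound. -/
lemma small_commonL {m n : ℕ} (hn : 1 ≤ n) {s : Set (Pre m n β)} (hKF : KF T s)
    {P : Set (Pre m n β)} (hP : IsEnum m P) (hcond : ∀ p ∈ P, Pt T p ∧ p ∈ s) :
    (commonL T s P).Finite ∧ (commonL T s P).ncard ≤ n - 1 := by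
  by_contra hcon
  obtain ⟨e, hei, hes⟩ := exists_inj_into hcon hn
  refine hKF ⟨enumOf hP, e, enumOf_inj hP, hei, ?_, ?_, ?_⟩
  · intro i
    have hmem : enumOf hP i ∈ P := (enumOf_range hP).subset ⟨i, rfl⟩
    exact ⟨(hcond _ hmem).2, (hcond _ hmem).1⟩
  · intro j
    have := hes ⟨j, rfl⟩
    exact ⟨this.1, this.2.1⟩
  · intro i j
    have hmem : enumOf hP i ∈ P := (enumOf_range hP).subset ⟨i, rfl⟩
    exact (hes ⟨j, rfl⟩).2.2 _ hmem

lemma small_commonP {m n : ℕ} (hm : 1 ≤ m) {s : Set (Pre m n β)} (hKF : KF T s)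
    {L : Set (Pre m n β)} (hL : IsEnum n L) (hcond : ∀ y ∈ L, Ln T y ∧ y ∈ s) :
    (commonP T s L).Finite ∧ (commonP T s L).ncard ≤ m - 1 := by
  by_contra hcon
  obtain ⟨e, hei, hes⟩ := exists_inj_into hcon hm
  refine hKF ⟨e, enumOf hL, hei, enumOf_inj hL, ?_, ?_, ?_⟩
  · intro i
    have := hes ⟨i, rfl⟩
    exact ⟨this.1, this.2.1⟩
  · intro j
    have hmem : enumOf hL j ∈ L := (enumOf_range hL).subset ⟨j, rfl⟩
    exact ⟨(hcond _ hmem).2, (hcond _ hmem).1⟩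
  · intro i j
    have hmem : enumOf hL j ∈ L := (enumOf_range hL).subset ⟨j, rfl⟩
    exact (hes ⟨i, rfl⟩).2.2 _ hmem

/-- Statement: the common lines of an `m`-set of points of stage `k` stabilise at
stage `k+1`, being exactly `n-1` many. -/
def StatL (m n : ℕ) (k : ℕ) : Prop :=
  ∀ (P : Set (Pre m n β)) (h : IsEnum m P),
    (∀ p ∈ P, Pt T p ∧ p ∈ stage T k) →
    commonL T (stage T (k + 1)) P
        = commonL T (stage T k) P ∪
          Set.range (fun j : Fin ((n - 1) - (commonL T (stage T k) P).ncard) =>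
            Pre.nl (enumOf h) j.1)
      ∧ (commonL T (stage T (k + 1)) P).Finite
      ∧ (commonL T (stage T (k + 1)) P).ncard = n - 1

def StatP (m n : ℕ) (k : ℕ) : Prop :=
  ∀ (L : Set (Pre m n β)) (h : IsEnum n L),
    (∀ y ∈ L, Ln T y ∧ y ∈ stage T k) →
    commonP T (stage T (k + 1)) L
        = commonP T (stage T k) L ∪
          Set.range (fun i : Fin ((m - 1) - (commonP T (stage T k) L).ncard) =>
            Pre.np (enumOf h) i.1)
      ∧ (commonP T (stage T (k + 1)) L).Finite
      ∧ (commonP T (stage T (k + 1)) L).ncard = m - 1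

lemma nl_mem_imp {m n : ℕ} (hn : 1 ≤ n) {k : ℕ} (hSt : ∀ t, t < k → StatL T m n t)
    (hKF : KF T (stage (m := m) (n := n) T k)) {P : Set (Pre m n β)} (hP : IsEnum m P)
    (hcond : ∀ p ∈ P, Pt T p ∧ p ∈ stage T k) {j : ℕ}
    (hj : Pre.nl (enumOf hP) j ∈ stage T k) :
    (commonL T (stage T k) P).ncard = n - 1 := by
  classical
  have hex : ∃ t, Pre.nl (enumOf hP) j ∈ stage T t := ⟨k, hj⟩
  have ht : Pre.nl (enumOf hP) j ∈ stage T (Nat.find hex) := Nat.find_spec hex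
  have htk : Nat.find hex ≤ k := Nat.find_min' hex hj
  rcases hT : Nat.find hex with _ | t'
  · rw [hT] at ht
    obtain ⟨z, hz⟩ := ht
    exact absurd hz (fun h => nomatch h)
  · rw [hT] at ht htk
    have hmin : Pre.nl (enumOf hP) j ∉ stage T t' := by
      have := Nat.find_min hex (m := t') (by omega)
      exact this
    rcases mem_stage_succ_elim T ht with h | h | h
    · exact absurd h hmin
    · obtain ⟨-, hacond, hjlt, -⟩ := nl_new_elim T h
      have hrange : Set.range (enumOf hP) = P := enumOf_range hP
      rw [hrange] at hjlt
      have hcondt' : ∀ p ∈ P, Pt T p ∧ p ∈ stage T t' := by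
        intro p hp
        rw [← hrange] at hp
        obtain ⟨i, rfl⟩ := hp
        exact hacond i
      obtain ⟨-, -, hncard⟩ := hSt t' (by omega) P hP hcondt'
      have hsub : commonL T (stage T (t' + 1)) P ⊆ commonL T (stage T k) P :=
        commonL_mono T (stage_mono T htk)
      obtain ⟨hfin, hle⟩ := small_commonL T hn hKF hP hcond
      have := Set.ncard_le_ncard hsub hfin
      omega
    · obtain ⟨b, i, heq⟩ := np_shape_new T h
      exact absurd heq (fun h => nomatch h)

lemma np_mem_imp {m n : ℕ} (hm : 1 ≤ m) {k : ℕ} (hSt : ∀ t, t < k → StatP T m n t)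
    (hKF : KF T (stage (m := m) (n := n) T k)) {L : Set (Pre m n β)} (hL : IsEnum n L)
    (hcond : ∀ y ∈ L, Ln T y ∧ y ∈ stage T k) {i : ℕ}
    (hi : Pre.np (enumOf hL) i ∈ stage T k) :
    (commonP T (stage T k) L).ncard = m - 1 := by
  classical
  have hex : ∃ t, Pre.np (enumOf hL) i ∈ stage T t := ⟨k, hi⟩
  have ht : Pre.np (enumOf hL) i ∈ stage T (Nat.find hex) := Nat.find_spec hex
  have htk : Nat.find hex ≤ k := Nat.find_min' hex hi
  rcases hT : Nat.find hex with _ | t'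
  · rw [hT] at ht
    obtain ⟨z, hz⟩ := ht
    exact absurd hz (fun h => nomatch h)
  · rw [hT] at ht htk
    have hmin : Pre.np (enumOf hL) i ∉ stage T t' := by
      have := Nat.find_min hex (m := t') (by omega)
      exact this
    rcases mem_stage_succ_elim T ht with h | h | h
    · exact absurd h hmin
    · obtain ⟨a, jj, heq⟩ := nl_shape_new T h
      exact absurd heq (fun h => nomatch h)
    · obtain ⟨-, hbcond, hilt, -⟩ := np_new_elim T h
      have hrange : Set.range (enumOf hL) = L := enumOf_range hL
      rw [hrange] at hilt
      have hcondt' : ∀ y ∈ L, Ln T y ∧ y ∈ stage T t' := by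
        intro y hy
        rw [← hrange] at hy
        obtain ⟨jb, rfl⟩ := hy
        exact hbcond jb
      obtain ⟨-, -, hncard⟩ := hSt t' (by omega) L hL hcondt'
      have hsub : commonP T (stage T (t' + 1)) L ⊆ commonP T (stage T k) L :=
        commonP_mono T (stage_mono T htk)
      obtain ⟨hfin, hle⟩ := small_commonP T hm hKF hL hcond
      have := Set.ncard_le_ncard hsub hfin
      omega

end Completion2

end Amalg648

namespace Amalg648

section MainInduction

variable {β : Type u} (T : IncidenceData β)

theorem main_induction {m n : ℕ} (hm : 1 ≤ m) (hn : 1 ≤ n) (h0 : KFree m n T) :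
    ∀ k, KF T (stage (m := m) (n := n) T k) ∧ StatL T m n k ∧ StatP T m n k := by
  intro k
  induction k using Nat.strong_induction_on with
  | _ k IH =>
  -- `K_{m,n}`-freeness of stage `k`
  have hKF : KF T (stage (m := m) (n := n) T k) := by
    cases k with
    | zero =>
        rintro ⟨p, l, hpi, hli, hps, hls, hinc⟩
        have hp0 : ∀ i, ∃ z, Pre.base z = p i := fun i => (hps i).1
        have hl0 : ∀ j, ∃ z, Pre.base z = l j := fun j => (hls j).1
        choose pz hpz using hp0
        choose lz hlz using hl0
        refine h0 ⟨pz, lz, ?_, ?_, ?_, ?_, ?_⟩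
        · intro i i' h
          exact hpi (by rw [← hpz i, ← hpz i', h])
        · intro j j' h
          exact hli (by rw [← hlz j, ← hlz j', h])
        · intro i
          have := (hps i).2; rw [← hpz i] at this; exact this
        · intro j
          have := (hls j).2; rw [← hlz j] at this; exact this
        · intro i j
          have := hinc i j; rw [← hpz i, ← hlz j] at this; exact this
    | succ t =>
        rintro ⟨p, l, hpi, hli, hps, hls, hinc⟩
        by_cases hold : (∀ i, p i ∈ stage T t) ∧ (∀ j, l j ∈ stage T t)
        · exact (IH t (by omega)).1
            ⟨p, l, hpi, hli, fun i => ⟨hold.1 i, (hps i).2⟩,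
              fun j => ⟨hold.2 j, (hls j).2⟩, hinc⟩
        · rcases em (∃ j0, l j0 ∉ stage T t) with ⟨j0, hj0⟩ | hnone
          · -- a genuinely new line appears in the configuration
            have hmem : l j0 ∈ stage T (t + 1) := (hls j0).1
            rcases mem_stage_succ_elim T hmem with h | h | h
            · exact absurd h hj0
            · obtain ⟨a, jj, heq⟩ := nl_shape_new T h
              rw [heq] at h hj0
              obtain ⟨hainj, hacond, hjlt, hacanon⟩ := nl_new_elim T h
              have hpr : ∀ i, p i ∈ Set.range a := by
                intro i
                have hi := hinc i j0; rw [heq] at hi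
                rcases inc_to_nl_elim T hi with hmem' | ⟨b, ii, hpeq, hbl⟩
                · exact hmem'
                · exfalso
                  have hpstage : p i ∈ stage T (t + 1) := (hps i).1
                  rcases mem_stage_succ_elim T hpstage with hh | hh | hh
                  · rw [hpeq] at hh
                    obtain ⟨-, htag⟩ := tags_np T t hh
                    obtain ⟨jb, hjb⟩ := hbl
                    have := (htag jb).2; rw [hjb] at this; exact hj0 this
                  · obtain ⟨a', j', heq'⟩ := nl_shape_new T hh
                    have := (hps i).2; rw [heq'] at this; exact (Pt_nl T a' j') this
                  · rw [hpeq] at hh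
                    obtain ⟨-, htag, -, -⟩ := np_new_elim T hh
                    obtain ⟨jb, hjb⟩ := hbl
                    have := (htag jb).2; rw [hjb] at this; exact hj0 this
              have hreq : Set.range p = Set.range a := by
                apply Set.eq_of_subset_of_ncard_le (Set.range_subset_iff.2 hpr) _
                  (Set.finite_range a)
                rw [ncard_range_of_inj hainj, ncard_range_of_inj hpi]
              have hPenum : IsEnum m (Set.range a) := ⟨a, hainj, rfl⟩
              have hcondP : ∀ x ∈ Set.range a, Pt T x ∧ x ∈ stage T t := by
                rintro x ⟨i, rfl⟩; exact ⟨(hacond i).1, (hacond i).2⟩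
              obtain ⟨-, hfin, hncard⟩ := (IH t (by omega)).2.1 (Set.range a) hPenum hcondP
              have hsub : Set.range l ⊆ commonL T (stage T (t + 1)) (Set.range a) := by
                rintro y ⟨j, rfl⟩
                refine ⟨(hls j).1, (hls j).2, ?_⟩
                intro x hx
                rw [← hreq] at hx
                obtain ⟨i', rfl⟩ := hx
                exact hinc i' j
              have := le_ncard_of_inj hli hsub hfin
              omega
            · obtain ⟨b, i, heq⟩ := np_shape_new T h
              have := (hls j0).2; rw [heq] at this; exact (Ln_np T b i) this
          · -- no new line, so a genuinely new point appears
            have hlall : ∀ j, l j ∈ stage T t := by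
              intro j
              by_contra hc
              exact hnone ⟨j, hc⟩
            have hptex : ∃ i0, p i0 ∉ stage T t := by
              rcases not_and_or.1 hold with h | h
              · push_neg at h; exact h
              · exact absurd hlall h
            obtain ⟨i0, hi0⟩ := hptex
            have hmem : p i0 ∈ stage T (t + 1) := (hps i0).1
            rcases mem_stage_succ_elim T hmem with h | h | h
            · exact absurd h hi0
            · obtain ⟨a', j', heq'⟩ := nl_shape_new T h
              have := (hps i0).2; rw [heq'] at this; exact (Pt_nl T a' j') this
            · obtain ⟨b, ii, heq⟩ := np_shape_new T h
              rw [heq] at h hi0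
              obtain ⟨hbinj, hbcond, hilt, hbcanon⟩ := np_new_elim T h
              have hlr : ∀ j, l j ∈ Set.range b := by
                intro j
                have hi := hinc i0 j; rw [heq] at hi
                rcases inc_np_elim T hi with hmem' | ⟨a', j', hleq, hal⟩
                · exact hmem'
                · exfalso
                  have hlstage : l j ∈ stage T (t + 1) := (hls j).1
                  rcases mem_stage_succ_elim T hlstage with hh | hh | hh
                  · rw [hleq] at hh
                    obtain ⟨-, htag⟩ := tags_nl T t hh
                    obtain ⟨ib, hib⟩ := hal
                    have := (htag ib).2; rw [hib] at this; exact hi0 this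
                  · rw [hleq] at hh
                    obtain ⟨-, htag, -, -⟩ := nl_new_elim T hh
                    obtain ⟨ib, hib⟩ := hal
                    have := (htag ib).2; rw [hib] at this; exact hi0 this
                  · obtain ⟨b', i', heq'⟩ := np_shape_new T hh
                    have := (hls j).2; rw [heq'] at this; exact (Ln_np T b' i') this
              have hreq : Set.range l = Set.range b := by
                apply Set.eq_of_subset_of_ncard_le (Set.range_subset_iff.2 hlr) _
                  (Set.finite_range b)
                rw [ncard_range_of_inj hbinj, ncard_range_of_inj hli]
              have hLenum : IsEnum n (Set.range b) := ⟨b, hbinj, rfl⟩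
              have hcondL : ∀ y ∈ Set.range b, Ln T y ∧ y ∈ stage T t := by
                rintro y ⟨j, rfl⟩; exact ⟨(hbcond j).1, (hbcond j).2⟩
              obtain ⟨-, hfin, hncard⟩ := (IH t (by omega)).2.2 (Set.range b) hLenum hcondL
              have hsub : Set.range p ⊆ commonP T (stage T (t + 1)) (Set.range b) := by
                rintro x ⟨i, rfl⟩
                refine ⟨(hps i).1, (hps i).2, ?_⟩
                intro y hy
                rw [← hreq] at hy
                obtain ⟨j', rfl⟩ := hy
                exact hinc i j'
              have := le_ncard_of_inj hpi hsub hfin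
              omega
  have hStL : ∀ t, t < k → StatL T m n t := fun t ht => (IH t ht).2.1
  have hStP : ∀ t, t < k → StatP T m n t := fun t ht => (IH t ht).2.2
  refine ⟨hKF, ?_, ?_⟩
  · -- StatL k
    intro P hP hcond
    have hsmall := small_commonL T hn hKF hP hcond
    have hold_sub : commonL T (stage T k) P ⊆ commonL T (stage T (k + 1)) P :=
      commonL_mono T (stage_succ_subset T k)
    have hnewmem : ∀ j : Fin ((n - 1) - (commonL T (stage T k) P).ncard),
        Pre.nl (enumOf hP) j.1 ∈ newLines T (stage T k) :=
      fun j => ⟨P, hP, j.1, rfl, hcond, j.2⟩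
    have hnew_sub : Set.range (fun j : Fin ((n - 1) - (commonL T (stage T k) P).ncard) =>
        Pre.nl (enumOf hP) j.1) ⊆ commonL T (stage T (k + 1)) P := by
      rintro y ⟨j, rfl⟩
      refine ⟨Or.inl (Or.inr (hnewmem j)), Ln_nl T _ _, ?_⟩
      intro x hx
      refine inc_to_nl_intro T (hcond x hx).1 ?_
      rw [enumOf_range hP]; exact hx
    have hdecomp : commonL T (stage T (k + 1)) P
        = commonL T (stage T k) P ∪
          Set.range (fun j : Fin ((n - 1) - (commonL T (stage T k) P).ncard) =>
            Pre.nl (enumOf hP) j.1) := by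
      apply Set.Subset.antisymm
      · intro y hy
        by_cases hyk : y ∈ stage T k
        · exact Or.inl ⟨hyk, hy.2⟩
        · rcases mem_stage_succ_elim T hy.1 with h | h | h
          · exact absurd h hyk
          · obtain ⟨a', j', heq⟩ := nl_shape_new T h
            subst heq
            obtain ⟨hainj, hacond, hjlt, hacanon⟩ := nl_new_elim T h
            have hPsub : P ⊆ Set.range a' := by
              intro x hx
              rcases inc_to_nl_elim T (hy.2.2 x hx) with hmem' | ⟨b, ii, hxeq, hbl⟩
              · exact hmem'
              · exfalso
                have hxk : x ∈ stage T k := (hcond x hx).2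
                rw [hxeq] at hxk
                obtain ⟨-, htag⟩ := tags_np T k hxk
                obtain ⟨jb, hjb⟩ := hbl
                have := (htag jb).2; rw [hjb] at this; exact hyk this
            have hPeq : P = Set.range a' := by
              apply Set.eq_of_subset_of_ncard_le hPsub _ (Set.finite_range a')
              rw [ncard_range_of_inj hainj, hP.ncard]
            have henum' : IsEnum m (Set.range a') := hPeq ▸ hP
            have hae : a' = enumOf hP := by
              rw [hacanon henum']
              exact (enumOf_congr hPeq hP henum').symm
            refine Or.inr ⟨⟨j', ?_⟩, ?_⟩
            · rw [← hPeq] at hjlt; exact hjlt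
            · show Pre.nl (enumOf hP) j' = Pre.nl a' j'
              rw [hae]
          · obtain ⟨b, i, heq⟩ := np_shape_new T h
            have := hy.2.1; rw [heq] at this; exact absurd this (Ln_np T b i)
      · exact Set.union_subset hold_sub hnew_sub
    refine ⟨hdecomp, ?_, ?_⟩
    · rw [hdecomp]; exact hsmall.1.union (Set.finite_range _)
    · rw [hdecomp]
      by_cases hd0 : (n - 1) - (commonL T (stage T k) P).ncard = 0
      · have hre : Set.range (fun j : Fin ((n - 1) - (commonL T (stage T k) P).ncard) =>
            Pre.nl (enumOf hP) j.1) = ∅ := by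
          rw [Set.range_eq_empty_iff, hd0]
          exact Fin.isEmpty'
        rw [hre, Set.union_empty]
        have := hsmall.2
        omega
      · have hdisj : Disjoint (commonL T (stage T k) P)
            (Set.range (fun j : Fin ((n - 1) - (commonL T (stage T k) P).ncard) =>
              Pre.nl (enumOf hP) j.1)) := by
          rw [Set.disjoint_right]
          rintro y ⟨j, rfl⟩ hy
          have hyk : Pre.nl (enumOf hP) j.1 ∈ stage T k := hy.1
          have := nl_mem_imp T hn hStL hKF hP hcond hyk
          have hj2 := j.2
          omega
        rw [Set.ncard_union_eq hdisj hsmall.1 (Set.finite_range _)]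
        rw [ncard_range_of_inj (by
          intro j j' hjj'
          have : j.1 = j'.1 := by injection hjj'
          exact Fin.ext this)]
        have := hsmall.2
        omega
  · -- StatP k
    intro L hL hcond
    have hsmall := small_commonP T hm hKF hL hcond
    have hold_sub : commonP T (stage T k) L ⊆ commonP T (stage T (k + 1)) L :=
      commonP_mono T (stage_succ_subset T k)
    have hnewmem : ∀ i : Fin ((m - 1) - (commonP T (stage T k) L).ncard),
        Pre.np (enumOf hL) i.1 ∈ newPoints T (stage T k) :=
      fun i => ⟨L, hL, i.1, rfl, hcond, i.2⟩
    have hnew_sub : Set.range (fun i : Fin ((m - 1) - (commonP T (stage T k) L).ncard) =>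
        Pre.np (enumOf hL) i.1) ⊆ commonP T (stage T (k + 1)) L := by
      rintro x ⟨i, rfl⟩
      refine ⟨Or.inr (hnewmem i), Pt_np T _ _, ?_⟩
      intro y hy
      refine inc_np_intro T (hcond y hy).1 ?_
      rw [enumOf_range hL]; exact hy
    have hdecomp : commonP T (stage T (k + 1)) L
        = commonP T (stage T k) L ∪
          Set.range (fun i : Fin ((m - 1) - (commonP T (stage T k) L).ncard) =>
            Pre.np (enumOf hL) i.1) := by
      apply Set.Subset.antisymm
      · intro x hx
        by_cases hxk : x ∈ stage T k
        · exact Or.inl ⟨hxk, hx.2⟩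
        · rcases mem_stage_succ_elim T hx.1 with h | h | h
          · exact absurd h hxk
          · obtain ⟨a', j', heq⟩ := nl_shape_new T h
            have := hx.2.1; rw [heq] at this; exact absurd this (Pt_nl T a' j')
          · obtain ⟨b', i', heq⟩ := np_shape_new T h
            subst heq
            obtain ⟨hbinj, hbcond, hilt, hbcanon⟩ := np_new_elim T h
            have hLsub : L ⊆ Set.range b' := by
              intro y hy
              rcases inc_np_elim T (hx.2.2 y hy) with hmem' | ⟨a'', j'', hyeq, hal⟩
              · exact hmem'
              · exfalso
                have hyk : y ∈ stage T k := (hcond y hy).2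
                rw [hyeq] at hyk
                obtain ⟨-, htag⟩ := tags_nl T k hyk
                obtain ⟨ib, hib⟩ := hal
                have := (htag ib).2; rw [hib] at this; exact hxk this
            have hLeq : L = Set.range b' := by
              apply Set.eq_of_subset_of_ncard_le hLsub _ (Set.finite_range b')
              rw [ncard_range_of_inj hbinj, hL.ncard]
            have henum' : IsEnum n (Set.range b') := hLeq ▸ hL
            have hbe : b' = enumOf hL := by
              rw [hbcanon henum']
              exact (enumOf_congr hLeq hL henum').symm
            refine Or.inr ⟨⟨i', ?_⟩, ?_⟩
            · rw [← hLeq] at hilt; exact hilt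
            · show Pre.np (enumOf hL) i' = Pre.np b' i'
              rw [hbe]
      · exact Set.union_subset hold_sub hnew_sub
    refine ⟨hdecomp, ?_, ?_⟩
    · rw [hdecomp]; exact hsmall.1.union (Set.finite_range _)
    · rw [hdecomp]
      by_cases hd0 : (m - 1) - (commonP T (stage T k) L).ncard = 0
      · have hre : Set.range (fun i : Fin ((m - 1) - (commonP T (stage T k) L).ncard) =>
            Pre.np (enumOf hL) i.1) = ∅ := by
          rw [Set.range_eq_empty_iff, hd0]
          exact Fin.isEmpty'
        rw [hre, Set.union_empty]
        have := hsmall.2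
        omega
      · have hdisj : Disjoint (commonP T (stage T k) L)
            (Set.range (fun i : Fin ((m - 1) - (commonP T (stage T k) L).ncard) =>
              Pre.np (enumOf hL) i.1)) := by
          rw [Set.disjoint_right]
          rintro x ⟨i, rfl⟩ hx
          have hxk : Pre.np (enumOf hL) i.1 ∈ stage T k := hx.1
          have := np_mem_imp T hm hStP hKF hL hcond hxk
          have hi2 := i.2
          omega
        rw [Set.ncard_union_eq hdisj hsmall.1 (Set.finite_range _)]
        rw [ncard_range_of_inj (by
          intro i i' hii'
          have : i.1 = i'.1 := by injection hii'
          exact Fin.ext this)]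
        have := hsmall.2
        omega

end MainInduction

end Amalg648

namespace Amalg648

section Limit

variable {β : Type u} (T : IncidenceData β)

def U (m n : ℕ) : Set (Pre m n β) := ⋃ k, stage T k

lemma stage_subset_U (m n k : ℕ) : stage T k ⊆ U T m n :=
  Set.subset_iUnion (fun k => stage (m := m) (n := n) T k) k

lemma mem_U {m n : ℕ} {x : Pre m n β} (h : x ∈ U T m n) : ∃ k, x ∈ stage T k :=
  Set.mem_iUnion.1 h

lemma exists_stage_all {m n : ℕ} {ι : Type} [Fintype ι] (e : ι → Pre m n β)
    (h : ∀ i, e i ∈ U T m n) : ∃ k, ∀ i, e i ∈ stage T k := by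
  classical
  choose ks hks using fun i => mem_U T (h i)
  refine ⟨Finset.univ.sup ks, fun i => ?_⟩
  exact stage_mono T (Finset.le_sup (Finset.mem_univ i)) (hks i)

lemma KF_U {m n : ℕ} (hm : 1 ≤ m) (hn : 1 ≤ n) (h0 : KFree m n T) :
    KF T (U T m n) := by
  rintro ⟨p, l, hpi, hli, hps, hls, hinc⟩
  obtain ⟨k1, hk1⟩ := exists_stage_all T p (fun i => (hps i).1)
  obtain ⟨k2, hk2⟩ := exists_stage_all T l (fun j => (hls j).1)
  refine (main_induction T hm hn h0 (max k1 k2)).1 ⟨p, l, hpi, hli, ?_, ?_, hinc⟩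
  · exact fun i => ⟨stage_mono T (le_max_left k1 k2) (hk1 i), (hps i).2⟩
  · exact fun j => ⟨stage_mono T (le_max_right k1 k2) (hk2 j), (hls j).2⟩

lemma persist_L {m n : ℕ} (hm : 1 ≤ m) (hn : 1 ≤ n) (h0 : KFree m n T) {k : ℕ}
    {P : Set (Pre m n β)} (hP : IsEnum m P)
    (hcond : ∀ p ∈ P, Pt T p ∧ p ∈ stage T k) :
    ∀ t, k + 1 ≤ t → commonL T (stage T t) P = commonL T (stage T (k + 1)) P := by
  intro t ht
  induction t with
  | zero => omega
  | succ t ih =>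
      rcases Nat.lt_or_ge (k + 1) (t + 1) with h' | h'
      · have hkt : k + 1 ≤ t := by omega
        have heq := ih hkt
        have hcond' : ∀ p ∈ P, Pt T p ∧ p ∈ stage T t := fun p hp =>
          ⟨(hcond p hp).1, stage_mono T (by omega) (hcond p hp).2⟩
        obtain ⟨hdec, -, -⟩ := (main_induction T hm hn h0 t).2.1 P hP hcond'
        obtain ⟨-, -, hnc⟩ := (main_induction T hm hn h0 k).2.1 P hP hcond
        have hnct : (commonL T (stage T t) P).ncard = n - 1 := by rw [heq, hnc]
        have hre : Set.range (fun j : Fin ((n - 1) - (commonL T (stage T t) P).ncard) =>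
            Pre.nl (enumOf hP) j.1) = ∅ := by
          rw [Set.range_eq_empty_iff, hnct, Nat.sub_self]
          exact Fin.isEmpty'
        rw [hdec, hre, Set.union_empty, heq]
      · have : k + 1 = t + 1 := by omega
        rw [this]

lemma persist_P {m n : ℕ} (hm : 1 ≤ m) (hn : 1 ≤ n) (h0 : KFree m n T) {k : ℕ}
    {L : Set (Pre m n β)} (hL : IsEnum n L)
    (hcond : ∀ y ∈ L, Ln T y ∧ y ∈ stage T k) :
    ∀ t, k + 1 ≤ t → commonP T (stage T t) L = commonP T (stage T (k + 1)) L := by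
  intro t ht
  induction t with
  | zero => omega
  | succ t ih =>
      rcases Nat.lt_or_ge (k + 1) (t + 1) with h' | h'
      · have hkt : k + 1 ≤ t := by omega
        have heq := ih hkt
        have hcond' : ∀ y ∈ L, Ln T y ∧ y ∈ stage T t := fun y hy =>
          ⟨(hcond y hy).1, stage_mono T (by omega) (hcond y hy).2⟩
        obtain ⟨hdec, -, -⟩ := (main_induction T hm hn h0 t).2.2 L hL hcond'
        obtain ⟨-, -, hnc⟩ := (main_induction T hm hn h0 k).2.2 L hL hcond
        have hnct : (commonP T (stage T t) L).ncard = m - 1 := by rw [heq, hnc]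
        have hre : Set.range (fun i : Fin ((m - 1) - (commonP T (stage T t) L).ncard) =>
            Pre.np (enumOf hL) i.1) = ∅ := by
          rw [Set.range_eq_empty_iff, hnct, Nat.sub_self]
          exact Fin.isEmpty'
        rw [hdec, hre, Set.union_empty, heq]
      · have : k + 1 = t + 1 := by omega
        rw [this]

lemma commonL_U {m n : ℕ} (hm : 1 ≤ m) (hn : 1 ≤ n) (h0 : KFree m n T) {k : ℕ}
    {P : Set (Pre m n β)} (hP : IsEnum m P)
    (hcond : ∀ p ∈ P, Pt T p ∧ p ∈ stage T k) :
    commonL T (U T m n) P = commonL T (stage T (k + 1)) P := by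
  apply Set.Subset.antisymm
  · intro y hy
    obtain ⟨t, ht⟩ := mem_U T hy.1
    have hy' : y ∈ commonL T (stage T (max t (k + 1))) P :=
      ⟨stage_mono T (le_max_left t (k + 1)) ht, hy.2⟩
    rw [persist_L T hm hn h0 hP hcond (max t (k + 1)) (le_max_right t (k + 1))] at hy'
    exact hy'
  · exact commonL_mono T (stage_subset_U T m n (k + 1))

lemma commonP_U {m n : ℕ} (hm : 1 ≤ m) (hn : 1 ≤ n) (h0 : KFree m n T) {k : ℕ}
    {L : Set (Pre m n β)} (hL : IsEnum n L)
    (hcond : ∀ y ∈ L, Ln T y ∧ y ∈ stage T k) :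
    commonP T (U T m n) L = commonP T (stage T (k + 1)) L := by
  apply Set.Subset.antisymm
  · intro x hx
    obtain ⟨t, ht⟩ := mem_U T hx.1
    have hx' : x ∈ commonP T (stage T (max t (k + 1))) L :=
      ⟨stage_mono T (le_max_left t (k + 1)) ht, hx.2⟩
    rw [persist_P T hm hn h0 hL hcond (max t (k + 1)) (le_max_right t (k + 1))] at hx'
    exact hx'
  · exact commonP_mono T (stage_subset_U T m n (k + 1))

lemma tags_nl_U {m n : ℕ} {a : Fin m → Pre m n β} {j : ℕ}
    (h : Pre.nl a j ∈ U T m n) : ∀ i, Pt T (a i) := by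
  obtain ⟨k, hk⟩ := mem_U T h
  exact fun i => ((tags_nl T k hk).2 i).1

lemma tags_np_U {m n : ℕ} {b : Fin n → Pre m n β} {i : ℕ}
    (h : Pre.np b i ∈ U T m n) : ∀ j, Ln T (b j) := by
  obtain ⟨k, hk⟩ := mem_U T h
  exact fun j => ((tags_np T k hk).2 j).1

/-- The carrier of the completed structure. -/
def Carrier (m n : ℕ) : Type u := {x : Pre m n β // x ∈ U T m n}

def SD (m n : ℕ) : IncidenceData (Carrier T m n) where
  pt x := Pt T x.1
  ln x := Ln T x.1
  inc x y := Inc T x.1 y.1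
  pt_or_ln x := Pt_or_Ln T x.1
  not_pt_and_ln x := not_Pt_and_Ln T x.1
  inc_pt_ln := by
    rintro ⟨x, hx⟩ ⟨y, hy⟩ h
    show Pt T x ∧ Ln T y
    cases x with
    | base zx =>
        cases y with
        | base zy =>
            obtain ⟨h1, h2⟩ := T.inc_pt_ln _ _ h
            exact ⟨h1, h2⟩
        | nl a j =>
            refine ⟨?_, trivial⟩
            obtain ⟨i, hi⟩ := (h : Pre.base zx ∈ Set.range a)
            have := tags_nl_U T hy i
            rw [hi] at this
            exact this
        | np b i => exact absurd h (fun h => h)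
    | nl a j => exact absurd h (not_Inc_nl_left T a j _)
    | np b i =>
        cases y with
        | base zy =>
            refine ⟨trivial, ?_⟩
            obtain ⟨jb, hjb⟩ := (h : Pre.base zy ∈ Set.range b)
            have := tags_np_U T hx jb
            rw [hjb] at this
            exact this
        | nl a j => exact ⟨trivial, trivial⟩
        | np b' i' => exact absurd h (fun h => h)

theorem complete_SD {m n : ℕ} (hm : 1 ≤ m) (hn : 1 ≤ n) (h0 : KFree m n T) :
    Complete m n (SD T m n) := by
  refine ⟨?_, ?_, ?_⟩
  · -- K-freeness
    rintro ⟨p, l, hpi, hli, hpp, hll, hinc⟩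
    refine KF_U T hm hn h0 ⟨fun i => (p i).1, fun j => (l j).1, ?_, ?_, ?_, ?_, ?_⟩
    · intro i i' h
      exact hpi (Subtype.ext h)
    · intro j j' h
      exact hli (Subtype.ext h)
    · exact fun i => ⟨(p i).2, hpp i⟩
    · exact fun j => ⟨(l j).2, hll j⟩
    · exact hinc
  · -- every m points lie on exactly n-1 common lines
    intro a ha hpt
    have hei : Function.Injective (fun i => (a i).1) := fun i i' h => ha (Subtype.ext h)
    obtain ⟨k, hk⟩ := exists_stage_all T (fun i => (a i).1) (fun i => (a i).2)
    set P : Set (Pre m n β) := Set.range (fun i => (a i).1) with hPdef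
    have hP : IsEnum m P := ⟨fun i => (a i).1, hei, rfl⟩
    have hcond : ∀ p ∈ P, Pt T p ∧ p ∈ stage T k := by
      rintro p ⟨i, rfl⟩
      exact ⟨hpt i, hk i⟩
    obtain ⟨-, hfin, hnc⟩ := (main_induction T hm hn h0 k).2.1 P hP hcond
    have hUc : commonL T (U T m n) P = commonL T (stage T (k + 1)) P :=
      commonL_U T hm hn h0 hP hcond
    have henum : IsEnum (n - 1) (commonL T (U T m n) P) := by
      rw [hUc]
      exact exists_enum_of_finite hfin hnc
    obtain ⟨bb, hbbi, hbbr⟩ := henum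
    have hbbmem : ∀ j, bb j ∈ commonL T (U T m n) P := fun j => hbbr.subset ⟨j, rfl⟩
    refine ⟨fun j => ⟨bb j, (hbbmem j).1⟩, ?_, ?_, ?_, ?_⟩
    · intro j j' h
      exact hbbi (congrArg Subtype.val h)
    · exact fun j => (hbbmem j).2.1
    · intro i j
      exact (hbbmem j).2.2 _ ⟨i, rfl⟩
    · rintro ⟨y, hyU⟩ hyln hyinc
      have hymem : y ∈ commonL T (U T m n) P := by
        refine ⟨hyU, hyln, ?_⟩
        rintro x ⟨i, rfl⟩
        exact hyinc i
      rw [← hbbr] at hymem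
      obtain ⟨j, hj⟩ := hymem
      exact ⟨j, Subtype.ext hj.symm⟩
  · -- every n lines pass through exactly m-1 common points
    intro b hb hln
    have hei : Function.Injective (fun j => (b j).1) := fun j j' h => hb (Subtype.ext h)
    obtain ⟨k, hk⟩ := exists_stage_all T (fun j => (b j).1) (fun j => (b j).2)
    set L : Set (Pre m n β) := Set.range (fun j => (b j).1) with hLdef
    have hL : IsEnum n L := ⟨fun j => (b j).1, hei, rfl⟩
    have hcond : ∀ y ∈ L, Ln T y ∧ y ∈ stage T k := by
      rintro y ⟨j, rfl⟩
      exact ⟨hln j, hk j⟩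
    obtain ⟨-, hfin, hnc⟩ := (main_induction T hm hn h0 k).2.2 L hL hcond
    have hUc : commonP T (U T m n) L = commonP T (stage T (k + 1)) L :=
      commonP_U T hm hn h0 hL hcond
    have henum : IsEnum (m - 1) (commonP T (U T m n) L) := by
      rw [hUc]
      exact exists_enum_of_finite hfin hnc
    obtain ⟨aa, haai, haar⟩ := henum
    have haamem : ∀ i, aa i ∈ commonP T (U T m n) L := fun i => haar.subset ⟨i, rfl⟩
    refine ⟨fun i => ⟨aa i, (haamem i).1⟩, ?_, ?_, ?_, ?_⟩
    · intro i i' h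
      exact haai (congrArg Subtype.val h)
    · exact fun i => (haamem i).2.1
    · intro i j
      exact (haamem i).2.2 _ ⟨j, rfl⟩
    · rintro ⟨x, hxU⟩ hxpt hxinc
      have hxmem : x ∈ commonP T (U T m n) L := by
        refine ⟨hxU, hxpt, ?_⟩
        rintro y ⟨j, rfl⟩
        exact hxinc j
      rw [← haar] at hxmem
      obtain ⟨i, hi⟩ := hxmem
      exact ⟨i, Subtype.ext hi.symm⟩

/-- The canonical embedding of the base structure into its completion. -/
def iota (m n : ℕ) : IncEmbedding T (SD T m n) where
  toFun x := ⟨Pre.base x, stage_subset_U T m n 0 ⟨x, rfl⟩⟩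
  inj := by
    intro x y h
    have : (Pre.base x : Pre m n β) = Pre.base y := congrArg Subtype.val h
    injection this
  pt_iff := fun x => Iff.rfl
  ln_iff := fun x => Iff.rfl
  inc_iff := fun x y => Iff.rfl

end Limit

/-- Composition of embeddings. -/
def compEmb {M : Type u} {N : Type v} {P : Type*} {S : IncidenceData M}
    {T : IncidenceData N} {W : IncidenceData P}
    (e1 : IncEmbedding S T) (e2 : IncEmbedding T W) : IncEmbedding S W where
  toFun := e2.toFun ∘ e1.toFun
  inj := e2.inj.comp e1.inj
  pt_iff := fun x => (e2.pt_iff _).trans (e1.pt_iff x)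
  ln_iff := fun x => (e2.ln_iff _).trans (e1.ln_iff x)
  inc_iff := fun x y => (e2.inc_iff _ _).trans (e1.inc_iff x y)

end Amalg648

open Amalg648 in
/-- The class `T^c_{m,n}` has the disjoint amalgamation property. -/
theorem statement_6 (m n : ℕ) (hm : 1 ≤ m) (hn : 1 ≤ n)
    {A B C : Type u} (SA : IncidenceData A) (SB : IncidenceData B) (SC : IncidenceData C)
    (hA : Complete m n SA) (hB : Complete m n SB) (hC : Complete m n SC)
    (f : IncEmbedding SA SB) (g : IncEmbedding SA SC) :
    ∃ (D : Type u) (SD : IncidenceData D)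
      (f' : IncEmbedding SB SD) (g' : IncEmbedding SC SD),
      Complete m n SD ∧
      (∀ a, f'.toFun (f.toFun a) = g'.toFun (g.toFun a)) ∧
      Set.range f'.toFun ∩ Set.range g'.toFun = f'.toFun '' Set.range f.toFun := by
  classical
  have hT : KFree m n (S0 f g) := kfree_S0 f g hA hB hC
  refine ⟨Carrier (S0 f g) m n, Amalg648.SD (S0 f g) m n,
    compEmb (iB f g) (iota (S0 f g) m n),
    compEmb (iC f g) (iota (S0 f g) m n),
    complete_SD (S0 f g) hm hn hT, ?_, ?_⟩
  · intro a
    exact congrArg (iota (S0 f g) m n).toFun (iB_f_iC_g f g a)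
  · show Set.range ((iota (S0 f g) m n).toFun ∘ (iB f g).toFun)
        ∩ Set.range ((iota (S0 f g) m n).toFun ∘ (iC f g).toFun)
      = ((iota (S0 f g) m n).toFun ∘ (iB f g).toFun) '' Set.range f.toFun
    rw [Set.range_comp, Set.range_comp, ← Set.image_inter (iota (S0 f g) m n).inj,
      range_inter f g, ← Set.image_comp]
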